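/- Let M be an n×n real positive semidefinite matrix, x, v, ξ ∈ ℝ^n, and η ∈ ℝ, and define f(q) := qᵀ(xxᵀ − η·I)q + 2·⟨q, η·ξ − (xxᵀ)v⟩ + ((xᵀv)² − η·‖ξ‖₂²) for q ∈ ℝ^n. For λ, θ ∈ ℝ let B(λ,θ) denote the (n+1)×(n+1) symmetric block matrix with upper-left block η·I − xxᵀ + λ·M, upper-right column (xxᵀ)v − η·ξ, and lower-right scalar η·‖ξ‖₂² − (xᵀv)² − λ − θ. Then: (a) if λ ≥ 0 and B(λ,θ) is positive semidefinite, then f(q) ≤ −θ for every q ∈ ℝ^n with qᵀMq ≤ 1; and (b) if S ∈ ℝ is the supremum of f over {q : qᵀMq ≤ 1} (i.e. this supremum is finite and equals S), then there exists λ ≥ 0 such that B(λ, −S) is positive semidefinite. -/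

import Mathlib

open Matrix
open scoped BigOperators

/-- The quadratic objective `f(q) = qᵀ(xxᵀ − ηI)q + 2⟨q, ηξ − (xxᵀ)v⟩ + ((xᵀv)² − η‖ξ‖₂²)`
of the FW-oracle subproblem with ellipsoidal support. -/
noncomputable def sProcObj {n : ℕ} (x v ξ : Fin n → ℝ) (η : ℝ) (q : Fin n → ℝ) : ℝ :=
  q ⬝ᵥ ((Matrix.vecMulVec x x - η • (1 : Matrix (Fin n) (Fin n) ℝ)) *ᵥ q) +
    2 * (q ⬝ᵥ (η • ξ - Matrix.vecMulVec x x *ᵥ v)) +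
    ((x ⬝ᵥ v) ^ 2 - η * (ξ ⬝ᵥ ξ))

/-- The block matrix `B(λ,θ)` of the S-procedure SDP: upper-left block
`ηI − xxᵀ + λM`, upper-right column `(xxᵀ)v − ηξ`, lower-right scalar
`η‖ξ‖₂² − (xᵀv)² − λ − θ`. -/
noncomputable def sProcMat {n : ℕ} (M : Matrix (Fin n) (Fin n) ℝ) (x v ξ : Fin n → ℝ)
    (η lam θ : ℝ) : Matrix (Fin n ⊕ Unit) (Fin n ⊕ Unit) ℝ :=
  Matrix.fromBlocks
    (η • (1 : Matrix (Fin n) (Fin n) ℝ) - Matrix.vecMulVec x x + lam • M)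
    (Matrix.of fun i _ => (Matrix.vecMulVec x x *ᵥ v - η • ξ) i)
    (Matrix.of fun _ j => (Matrix.vecMulVec x x *ᵥ v - η • ξ) j)
    (Matrix.of fun _ _ => η * (ξ ⬝ᵥ ξ) - (x ⬝ᵥ v) ^ 2 - lam - θ)


section SLemmaAux

variable {m : Type*} [Fintype m]

noncomputable def Qf (A : Matrix m m ℝ) (z : m → ℝ) : ℝ := z ⬝ᵥ (A *ᵥ z)
lemma Qf_zero (A : Matrix m m ℝ) : Qf A (0 : m → ℝ) = 0 := by simp [Qf]
lemma Qf_smul (A : Matrix m m ℝ) (c : ℝ) (z : m → ℝ) : Qf A (c • z) = c^2 * Qf A z := by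
  simp [Qf, Matrix.mulVec_smul, dotProduct_smul, smul_dotProduct]; ring
lemma Qf_expand (A : Matrix m m ℝ) (u w : m → ℝ) (s r : ℝ) :
    Qf A (s • u + r • w) = s^2 * Qf A u + s*r*((u ⬝ᵥ A *ᵥ w) + (w ⬝ᵥ A *ᵥ u)) + r^2 * Qf A w := by
  simp [Qf, Matrix.mulVec_add, Matrix.mulVec_smul, dotProduct_add, add_dotProduct,
    dotProduct_smul, smul_dotProduct]; ring
noncomputable def Wset (A B : Matrix m m ℝ) : Set (ℝ × ℝ) :=
  {p | ∃ z : m → ℝ, p = (Qf A z, Qf B z)}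
lemma Wset_zero (A B : Matrix m m ℝ) : (0 : ℝ × ℝ) ∈ Wset A B :=
  ⟨0, by simp [Qf_zero, Prod.ext_iff]⟩
lemma Wset_cone (A B : Matrix m m ℝ) {p : ℝ × ℝ} (hp : p ∈ Wset A B) {c : ℝ} (hc : 0 ≤ c) :
    c • p ∈ Wset A B := by
  obtain ⟨z, hz⟩ := hp
  exact ⟨Real.sqrt c • z, by simp [hz, Qf_smul, Real.sq_sqrt hc, Prod.ext_iff, smul_eq_mul]⟩

lemma dines (A B : Matrix m m ℝ) : Convex ℝ (Wset A B) := by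
  intro p hp q hq a b ha hb hab
  obtain ⟨u, hu⟩ := hp
  obtain ⟨w, hw⟩ := hq
  set p₁ := Qf A u with hp1
  set p₂ := Qf B u with hp2
  set q₁ := Qf A w with hq1
  set q₂ := Qf B w with hq2
  by_cases hdep : p₁ * q₂ - p₂ * q₁ = 0
  · -- linearly dependent case
    by_cases hp0 : p = 0
    · have : a • p + b • q = b • q := by rw [hp0]; simp
      rw [this]; exact Wset_cone A B ⟨w, hw⟩ hb
    · -- q = c • p
      obtain ⟨c, hc⟩ : ∃ c : ℝ, q = c • p := by
        by_cases h1 : p₁ = 0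
        · have hp2ne : p₂ ≠ 0 := by
            intro h2; exact hp0 (by rw [hu, h1, h2]; rfl)
          refine ⟨q₂ / p₂, ?_⟩
          have hq1z : q₁ = 0 := by
            have : p₂ * q₁ = 0 := by rw [h1] at hdep; linarith [hdep]
            rcases mul_eq_zero.mp this with h | h
            · exact absurd h hp2ne
            · exact h
          rw [hu, hw, Prod.smul_mk, smul_eq_mul, smul_eq_mul, h1, hq1z]
          field_simp
          simp
        · refine ⟨q₁ / p₁, ?_⟩
          have hq2e : q₂ = p₂ * q₁ / p₁ := by field_simp; linarith [hdep]
          rw [hu, hw, Prod.smul_mk, smul_eq_mul, smul_eq_mul, hq2e]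
          field_simp
      rw [hc, smul_smul]
      by_cases hcoef : 0 ≤ a + b * c
      · have : a • p + (b * c) • p = (a + b * c) • p := by rw [add_smul]
        rw [this]
        exact Wset_cone A B (⟨u, hu⟩ : p ∈ Wset A B) hcoef
      · push_neg at hcoef
        have hcneg : c < 0 := by nlinarith
        have : a • p + (b * c) • p = ((a + b*c)/c) • (c • p) := by
          rw [smul_smul, ← add_smul]; congr 1
          exact (div_mul_cancel₀ _ hcneg.ne).symm
        rw [this]
        exact Wset_cone A B (hc ▸ ⟨w, hw⟩) (div_nonneg_iff.mpr (Or.inr ⟨hcoef.le, hcneg.le⟩))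
  · -- linearly independent case
    set cA := (u ⬝ᵥ A *ᵥ w) + (w ⬝ᵥ A *ᵥ u) with hcAdef
    set cB := (u ⬝ᵥ B *ᵥ w) + (w ⬝ᵥ B *ᵥ u) with hcBdef
    set d := p₁ * q₂ - p₂ * q₁ with hddef
    set K := ((q₂ - p₂) * cA + (p₁ - q₁) * cB) / d with hKdef
    obtain ⟨ε, hε2, hεK⟩ : ∃ ε : ℝ, ε^2 = 1 ∧ 0 ≤ ε * K := by
      rcases le_total 0 K with h | h
      · exact ⟨1, by norm_num, by simpa using h⟩
      · exact ⟨-1, by norm_num, by nlinarith⟩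
    set gA : ℝ → ℝ := fun s => s^2*p₁ + s*(1-s)*(ε*cA) + (1-s)^2*q₁ with hgAdef
    set gB : ℝ → ℝ := fun s => s^2*p₂ + s*(1-s)*(ε*cB) + (1-s)^2*q₂ with hgBdef
    set φ : ℝ → ℝ := fun s => (q₂ * gA s - q₁ * gB s) / d with hφdef
    set ψ : ℝ → ℝ := fun s => (-p₂ * gA s + p₁ * gB s) / d with hψdef
    have hgA : ∀ s : ℝ, Qf A (s • u + ((1-s)*ε) • w) = gA s := by
      intro s
      rw [Qf_expand, hgAdef]
      simp only
      linear_combination ((1-s)^2 * q₁) * hε2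
    have hgB : ∀ s : ℝ, Qf B (s • u + ((1-s)*ε) • w) = gB s := by
      intro s
      rw [Qf_expand, hgBdef]
      simp only
      linear_combination ((1-s)^2 * q₂) * hε2
    have hsum : ∀ s : ℝ, φ s + ψ s = s^2 + (1-s)^2 + s*(1-s)*(ε*K) := by
      intro s
      simp only [hφdef, hψdef, hgAdef, hgBdef, hKdef]
      field_simp
      ring
    have hpos : ∀ s : ℝ, s ∈ Set.Icc (0:ℝ) 1 → 0 < φ s + ψ s := by
      intro s hs
      rw [hsum s]
      have h1 : 0 ≤ s * (1 - s) := mul_nonneg hs.1 (by linarith [hs.2])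
      nlinarith [sq_nonneg (s - 1/2)]
    have hcont : ContinuousOn (fun s => φ s / (φ s + ψ s)) (Set.Icc (0:ℝ) 1) := by
      apply ContinuousOn.div
      · apply Continuous.continuousOn
        simp only [hφdef, hgAdef, hgBdef]
        fun_prop
      · apply Continuous.continuousOn
        simp only [hφdef, hψdef, hgAdef, hgBdef]
        fun_prop
      · intro s hs; exact (hpos s hs).ne'
    have hf0 : φ (0:ℝ) / (φ 0 + ψ 0) = 0 := by
      have : φ (0:ℝ) = 0 := by simp only [hφdef, hgAdef, hgBdef]; ring_nf
      rw [this]; simp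
    have hf1 : φ (1:ℝ) / (φ 1 + ψ 1) = 1 := by
      have h1 : φ (1:ℝ) = 1 := by
        simp only [hφdef, hgAdef, hgBdef]; field_simp; rw [hddef]; ring
      have h2 : ψ (1:ℝ) = 0 := by
        simp only [hψdef, hgAdef, hgBdef]; field_simp; ring
      rw [h1, h2]; norm_num
    have hmem : a ∈ Set.Icc ((fun s => φ s / (φ s + ψ s)) 0) ((fun s => φ s / (φ s + ψ s)) 1) := by
      simp only [hf0, hf1]
      exact ⟨ha, by linarith⟩
    obtain ⟨s, hsIcc, hfs⟩ := intermediate_value_Icc (by norm_num : (0:ℝ) ≤ 1) hcont hmem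
    set z := s • u + ((1-s)*ε) • w with hzdef
    set val := φ s + ψ s with hvaldef
    have hval : 0 < val := hpos s hsIcc
    have hφs : φ s = a * val := by
      have : φ s / val = a := hfs
      field_simp at this
      linarith [this]
    have hψs : ψ s = b * val := by
      have : val = φ s + ψ s := hvaldef
      nlinarith [hφs, hab]
    have eA : gA s = φ s * p₁ + ψ s * q₁ := by
      simp only [hφdef, hψdef]
      field_simp
      ring
    have eB : gB s = φ s * p₂ + ψ s * q₂ := by
      simp only [hφdef, hψdef]
      field_simp
      ring
    have key : a • p + b • q = val⁻¹ • ((Qf A z, Qf B z) : ℝ × ℝ) := by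
      rw [hu, hw]
      have hQA : Qf A z = gA s := hgA s
      have hQB : Qf B z = gB s := hgB s
      rw [Prod.ext_iff]
      constructor
      · simp only [Prod.smul_fst, Prod.fst_add, smul_eq_mul, hQA, eA, hφs, hψs]
        field_simp
      · simp only [Prod.smul_snd, Prod.snd_add, smul_eq_mul, hQB, eB, hφs, hψs]
        field_simp
    rw [key]
    exact Wset_cone A B ⟨z, rfl⟩ (inv_nonneg.mpr hval.le)

lemma homog_s_lemma (A B : Matrix m m ℝ) (z₀ : m → ℝ) (h₀ : 0 < Qf A z₀)
    (himp : ∀ z : m → ℝ, 0 ≤ Qf A z → 0 ≤ Qf B z) :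
    ∃ lam : ℝ, 0 ≤ lam ∧ ∀ z : m → ℝ, lam * Qf A z ≤ Qf B z := by
  set C : Set (ℝ × ℝ) := {p | 0 < p.1 ∧ p.2 < 0} with hCdef
  have hCconv : Convex ℝ C := by
    intro p hp q hq a b ha hb hab
    constructor
    · rcases eq_or_lt_of_le ha with h | h
      · simp only [← h, zero_smul, zero_add]
        have : b = 1 := by linarith
        simpa [this] using hq.1
      · have : 0 ≤ b * q.1 := mul_nonneg hb hq.1.le
        have : 0 < a * p.1 := mul_pos h hp.1
        simp only [Prod.fst_add, Prod.smul_fst, smul_eq_mul]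
        linarith
    · have h1 : a * p.2 ≤ 0 := mul_nonpos_of_nonneg_of_nonpos ha hp.2.le
      have h2 : b * q.2 ≤ 0 := mul_nonpos_of_nonneg_of_nonpos hb hq.2.le
      have : ¬(a = 0 ∧ b = 0) := by rintro ⟨h, h'⟩; rw [h, h'] at hab; norm_num at hab
      simp only [Prod.snd_add, Prod.smul_snd, smul_eq_mul]
      rcases eq_or_lt_of_le ha with h | h
      · have hb1 : b = 1 := by linarith
        simp [← h, hb1]; exact hq.2
      · nlinarith [mul_pos h (neg_pos.mpr hp.2)]
  have hCopen : IsOpen C := by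
    have : C = (Set.Ioi (0:ℝ) ×ˢ Set.Iio (0:ℝ)) := by
      ext p; simp [hCdef, Set.mem_prod]
    rw [this]
    exact (isOpen_Ioi).prod (isOpen_Iio)
  have hdisj : Disjoint C (Wset A B) := by
    rw [Set.disjoint_left]
    rintro p ⟨hp1, hp2⟩ ⟨z, hz⟩
    rw [hz] at hp1 hp2
    exact absurd (himp z hp1.le) (not_le.mpr hp2)
  obtain ⟨f, uu, hfC, hfW⟩ := geometric_hahn_banach_open hCconv hCopen (dines A B) hdisj
  have hu0 : uu ≤ 0 := by simpa using hfW 0 (Wset_zero A B)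
  have hfW0 : ∀ pp ∈ Wset A B, 0 ≤ f pp := by
    intro pp hpp
    by_contra hneg
    push_neg at hneg
    have hc : 0 < (uu - 1) / f pp := div_pos_of_neg_of_neg (by linarith) hneg
    have := hfW _ (Wset_cone A B hpp hc.le)
    rw [_root_.map_smul, smul_eq_mul] at this
    rw [div_mul_cancel₀ _ hneg.ne] at this
    linarith
  set α := f (1, 0) with hα
  set β := f (0, 1) with hβ
  have hf_eq : ∀ pp : ℝ × ℝ, f pp = α * pp.1 + β * pp.2 := by
    intro pp
    have : pp = pp.1 • ((1:ℝ), (0:ℝ)) + pp.2 • ((0:ℝ), (1:ℝ)) := by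
      simp [Prod.ext_iff]
    rw [this, _root_.map_add, _root_.map_smul, _root_.map_smul, smul_eq_mul, smul_eq_mul]
    simp [hα, hβ]
    ring
  have hC' : ∀ e δ : ℝ, 0 < e → 0 < δ → α * e - β * δ < 0 := by
    intro e δ he hδ
    have := hfC (e, -δ) ⟨he, by simpa using neg_neg_of_pos hδ⟩
    rw [hf_eq] at this
    simp only at this
    linarith
  have hαle : α ≤ 0 := by
    by_contra h
    push_neg at h
    rcases le_or_gt β 0 with hb | hb
    · have := hC' 1 1 one_pos one_pos; nlinarith
    · have h2 := hC' 1 (α / (2*β)) one_pos (by positivity)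
      have h3 : β * (α / (2*β)) = α / 2 := by field_simp
      rw [h3] at h2; linarith
  have hβge : 0 ≤ β := by
    by_contra h
    push_neg at h
    have hαneg : α < 0 := by
      have := hC' 1 1 one_pos one_pos
      rcases lt_or_ge α 0 with h' | h'
      · exact h'
      · nlinarith
    have h2 := hC' (β / (2*α)) 1 (div_pos_of_neg_of_neg h (by linarith)) one_pos
    have h3 : α * (β / (2*α)) = β / 2 := by
      have h4 : (2:ℝ)*α ≠ 0 := by intro hz; nlinarith
      rw [mul_comm, div_mul_eq_mul_div, mul_div_mul_right _ _ hαneg.ne]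
    rw [h3] at h2; linarith
  have hWpos : ∀ z : m → ℝ, 0 ≤ α * Qf A z + β * Qf B z := by
    intro z
    have := hfW0 _ (⟨z, rfl⟩ : ((Qf A z, Qf B z) : ℝ × ℝ) ∈ Wset A B)
    rw [hf_eq] at this
    simpa using this
  have hβpos : 0 < β := by
    rcases eq_or_lt_of_le hβge with h | h
    · exfalso
      have h1 := hWpos z₀
      rw [← h] at h1
      have hα0 : 0 ≤ α := by nlinarith
      have := hC' 1 1 one_pos one_pos
      rw [← h] at this
      nlinarith
    · exact h
  refine ⟨-α / β, div_nonneg (by linarith) hβpos.le, fun z => ?_⟩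
  have := hWpos z
  rw [div_mul_eq_mul_div, div_le_iff₀ hβpos]
  nlinarith

end SLemmaAux

lemma vecMulVec_mulVec' {n : ℕ} (x y q : Fin n → ℝ) :
    Matrix.vecMulVec x y *ᵥ q = (y ⬝ᵥ q) • x := by
  ext i
  simp [Matrix.mulVec, Matrix.vecMulVec_apply, dotProduct, Finset.mul_sum, Finset.sum_mul,
    mul_assoc, mul_comm, mul_left_comm]

lemma qf_blocks {n : ℕ} (A : Matrix (Fin n) (Fin n) ℝ) (c : Fin n → ℝ) (e : ℝ)
    (q : Fin n → ℝ) (t : ℝ) :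
    Sum.elim q (fun _ => t) ⬝ᵥ
      (Matrix.fromBlocks A (Matrix.of fun i (_ : Unit) => c i)
        (Matrix.of fun (_ : Unit) j => c j) (Matrix.of fun (_ : Unit) (_ : Unit) => e) *ᵥ
        Sum.elim q (fun _ => t))
    = q ⬝ᵥ (A *ᵥ q) + 2 * (t * (c ⬝ᵥ q)) + e * t^2 := by
  rw [Matrix.fromBlocks_mulVec, sumElim_dotProduct_sumElim]
  simp only [Sum.elim_comp_inl, Sum.elim_comp_inr]
  have h1 : (Matrix.of fun i (_ : Unit) => c i) *ᵥ (fun _ => t) = t • c := by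
    ext i; simp [Matrix.mulVec, dotProduct, mul_comm]
  have h2 : (Matrix.of fun (_ : Unit) j => c j) *ᵥ q = fun _ => c ⬝ᵥ q := by
    ext u; simp [Matrix.mulVec, dotProduct]
  have h3 : (Matrix.of fun (_ : Unit) (_ : Unit) => e) *ᵥ (fun _ => t) = fun _ => e * t := by
    ext u; simp [Matrix.mulVec, dotProduct]
  rw [h1, h2, h3]
  have h4 : (fun (_ : Unit) => t) ⬝ᵥ ((fun _ => c ⬝ᵥ q) + fun _ => e * t)
      = t * (c ⬝ᵥ q + e * t) := by
    simp [dotProduct]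
  rw [h4, dotProduct_add, dotProduct_smul]
  rw [dotProduct_comm q c]
  ring_nf

lemma sProcObj_eq {n : ℕ} (x v ξ : Fin n → ℝ) (η : ℝ) (q : Fin n → ℝ) :
    sProcObj x v ξ η q = (x ⬝ᵥ (q - v))^2 - η * ((q - ξ) ⬝ᵥ (q - ξ)) := by
  rw [sProcObj, Matrix.sub_mulVec, vecMulVec_mulVec', Matrix.smul_mulVec,
    Matrix.one_mulVec]
  rw [dotProduct_sub, dotProduct_smul, dotProduct_smul, dotProduct_sub,
    dotProduct_smul, vecMulVec_mulVec', dotProduct_smul]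
  have e1 : q ⬝ᵥ x = x ⬝ᵥ q := dotProduct_comm _ _
  have e2 : ξ ⬝ᵥ q = q ⬝ᵥ ξ := dotProduct_comm _ _
  have e3 : x ⬝ᵥ (q - v) = x ⬝ᵥ q - x ⬝ᵥ v := dotProduct_sub _ _ _
  have e4 : (q - ξ) ⬝ᵥ (q - ξ) = q ⬝ᵥ q - q ⬝ᵥ ξ - (ξ ⬝ᵥ q - ξ ⬝ᵥ ξ) := by
    rw [sub_dotProduct, dotProduct_sub, dotProduct_sub]
  rw [e3, e4, e2]
  simp only [smul_eq_mul, e1]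
  ring

lemma qf_sProcMat {n : ℕ} (M : Matrix (Fin n) (Fin n) ℝ) (x v ξ : Fin n → ℝ)
    (η lam θ : ℝ) (q : Fin n → ℝ) (t : ℝ) :
    Sum.elim q (fun _ => t) ⬝ᵥ (sProcMat M x v ξ η lam θ *ᵥ Sum.elim q (fun _ => t))
    = lam * (q ⬝ᵥ (M *ᵥ q) - t^2) + η * ((q - t • ξ) ⬝ᵥ (q - t • ξ))
      - (x ⬝ᵥ (q - t • v))^2 - θ * t^2 := by
  rw [sProcMat, qf_blocks]
  rw [Matrix.add_mulVec, Matrix.sub_mulVec, Matrix.smul_mulVec, Matrix.one_mulVec,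
    vecMulVec_mulVec', Matrix.smul_mulVec]
  rw [dotProduct_add, dotProduct_sub, dotProduct_smul, dotProduct_smul, dotProduct_smul]
  rw [sub_dotProduct, smul_dotProduct, vecMulVec_mulVec', smul_dotProduct]
  have e1 : q ⬝ᵥ x = x ⬝ᵥ q := dotProduct_comm _ _
  have e2 : ξ ⬝ᵥ q = q ⬝ᵥ ξ := dotProduct_comm _ _
  have e3 : x ⬝ᵥ (q - t • v) = x ⬝ᵥ q - t * (x ⬝ᵥ v) := by
    rw [dotProduct_sub, dotProduct_smul]; simp
  have e4 : (q - t • ξ) ⬝ᵥ (q - t • ξ)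
      = q ⬝ᵥ q - t * (q ⬝ᵥ ξ) - (t * (q ⬝ᵥ ξ)) + t^2 * (ξ ⬝ᵥ ξ) := by
    rw [sub_dotProduct, dotProduct_sub, dotProduct_sub, smul_dotProduct, dotProduct_smul,
      smul_dotProduct, dotProduct_smul, e2]
    simp only [smul_eq_mul]
    ring
  rw [e3, e4]
  simp only [smul_eq_mul, e1, e2]
  ring

lemma z_decomp {n : ℕ} (z : Fin n ⊕ Unit → ℝ) :
    z = Sum.elim (fun i => z (Sum.inl i)) (fun _ : Unit => z (Sum.inr ())) := by
  funext i
  cases i with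
  | inl i => rfl
  | inr u => cases u; rfl

/-- coercivity at infinity: if `qᵀMq ≤ 0` and `f(s•q) ≤ S` for all `s`, then the leading
coefficient is nonpositive. -/
lemma leading_nonpos {n : ℕ} (x v ξ : Fin n → ℝ) (η S : ℝ) (q : Fin n → ℝ)
    (hb : ∀ s : ℝ, sProcObj x v ξ η (s • q) ≤ S) :
    (x ⬝ᵥ q)^2 - η * (q ⬝ᵥ q) ≤ 0 := by
  by_contra hh
  push_neg at hh
  set a := (x ⬝ᵥ q)^2 - η * (q ⬝ᵥ q) with ha
  set b := -2 * ((x ⬝ᵥ q) * (x ⬝ᵥ v)) + 2 * η * (q ⬝ᵥ ξ) with hbb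
  set c := (x ⬝ᵥ v)^2 - η * (ξ ⬝ᵥ ξ) with hcc
  have hexp : ∀ s : ℝ, sProcObj x v ξ η (s • q) = s^2 * a + s * b + c := by
    intro s
    rw [sProcObj_eq]
    have e1 : x ⬝ᵥ (s • q - v) = s * (x ⬝ᵥ q) - x ⬝ᵥ v := by
      rw [dotProduct_sub, dotProduct_smul]; simp
    have e2 : (s • q - ξ) ⬝ᵥ (s • q - ξ)
        = s^2 * (q ⬝ᵥ q) - 2 * s * (q ⬝ᵥ ξ) + ξ ⬝ᵥ ξ := by
      rw [sub_dotProduct, dotProduct_sub, dotProduct_sub, smul_dotProduct, dotProduct_smul,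
        smul_dotProduct, dotProduct_smul, dotProduct_comm ξ q]
      simp only [smul_eq_mul]
      ring
    rw [e1, e2, ha, hbb, hcc]
    ring
  set s := max 1 ((|b| + |c| + |S| + 1) / a) with hs
  have hs1 : (1:ℝ) ≤ s := le_max_left _ _
  have hs2 : (|b| + |c| + |S| + 1) / a ≤ s := le_max_right _ _
  have hsa : |b| + |c| + |S| + 1 ≤ s * a := by
    rw [div_le_iff₀ hh] at hs2
    linarith
  have hfin := hb s
  rw [hexp s] at hfin
  nlinarith [abs_nonneg b, abs_nonneg c, abs_nonneg S, le_abs_self b, neg_abs_le b,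
    le_abs_self c, neg_abs_le c, le_abs_self S, neg_abs_le S,
    mul_le_mul_of_nonneg_left hsa (by linarith : (0:ℝ) ≤ s)]


/-- Lemma 6.6 (S-procedure): (a) if `λ ≥ 0` and `B(λ,θ) ⪰ 0` then `f(q) ≤ −θ` on the
ellipsoid `{q : qᵀMq ≤ 1}`; (b) if the supremum of `f` over the ellipsoid is finite and
equals `S`, then there is `λ ≥ 0` with `B(λ,−S) ⪰ 0`. -/
theorem s_procedure_ellipsoid {n : ℕ} (M : Matrix (Fin n) (Fin n) ℝ)
    (hM : M.PosSemidef) (x v ξ : Fin n → ℝ) (η : ℝ) :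
    (∀ lam θ : ℝ, 0 ≤ lam → (sProcMat M x v ξ η lam θ).PosSemidef →
      ∀ q : Fin n → ℝ, q ⬝ᵥ (M *ᵥ q) ≤ 1 → sProcObj x v ξ η q ≤ -θ) ∧
    (∀ S : ℝ, IsLUB ((fun q => sProcObj x v ξ η q) '' {q | q ⬝ᵥ (M *ᵥ q) ≤ 1}) S →
      ∃ lam : ℝ, 0 ≤ lam ∧ (sProcMat M x v ξ η lam (-S)).PosSemidef) := by
  constructor
  · -- part (a)
    intro lam θ hlam hpsd q hq
    have h := (posSemidef_iff_dotProduct_mulVec.mp hpsd).2 (Sum.elim q (fun _ => 1))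
    rw [show star (Sum.elim q fun _ => (1:ℝ)) = Sum.elim q (fun _ => 1) from rfl] at h
    rw [qf_sProcMat] at h
    rw [sProcObj_eq]
    have h2 : lam * (q ⬝ᵥ (M *ᵥ q) - 1) ≤ 0 :=
      mul_nonpos_of_nonneg_of_nonpos hlam (by linarith)
    have e1 : q - (1:ℝ) • ξ = q - ξ := by simp
    have e2 : q - (1:ℝ) • v = q - v := by simp
    rw [e1, e2] at h
    nlinarith [h, h2]
  · -- part (b)
    intro S hS
    have hub : ∀ q : Fin n → ℝ, q ⬝ᵥ (M *ᵥ q) ≤ 1 → sProcObj x v ξ η q ≤ S := by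
      intro q hq
      exact hS.1 ⟨q, hq, rfl⟩
    set A₁ : Matrix (Fin n ⊕ Unit) (Fin n ⊕ Unit) ℝ :=
      Matrix.fromBlocks (-M) (Matrix.of fun i (_ : Unit) => (0:ℝ))
        (Matrix.of fun (_ : Unit) j => (0:ℝ)) (Matrix.of fun (_ : Unit) (_ : Unit) => (1:ℝ))
      with hA₁
    set B₂ := sProcMat M x v ξ η 0 (-S) with hB₂
    have hQA : ∀ (q : Fin n → ℝ) (t : ℝ),
        Qf A₁ (Sum.elim q (fun _ => t)) = t^2 - q ⬝ᵥ (M *ᵥ q) := by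
      intro q t
      rw [Qf, hA₁, qf_blocks]
      have : (fun (i : Fin n) => (0:ℝ)) ⬝ᵥ q = 0 := by simp [dotProduct]
      rw [Matrix.neg_mulVec, dotProduct_neg]
      simp [dotProduct]
      ring
    have hQB : ∀ (q : Fin n → ℝ) (t : ℝ),
        Qf B₂ (Sum.elim q (fun _ => t))
        = η * ((q - t • ξ) ⬝ᵥ (q - t • ξ)) - (x ⬝ᵥ (q - t • v))^2 + S * t^2 := by
      intro q t
      rw [Qf, hB₂, qf_sProcMat]
      ring
    have h₀ : 0 < Qf A₁ (Sum.elim (fun _ => 0) (fun _ => 1)) := by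
      rw [hQA]
      simp [dotProduct]
    have himp : ∀ z : Fin n ⊕ Unit → ℝ, 0 ≤ Qf A₁ z → 0 ≤ Qf B₂ z := by
      intro z hz
      rw [z_decomp z] at hz ⊢
      set q : Fin n → ℝ := fun i => z (Sum.inl i) with hqdef
      set t : ℝ := z (Sum.inr ()) with htdef
      rw [hQA] at hz
      rw [hQB]
      by_cases ht : t = 0
      · rw [ht] at hz ⊢
        simp only [zero_smul, sub_zero] at hz ⊢
        rw [show ((0:ℝ)^2 : ℝ) = 0 by norm_num] at hz
        simp only [ne_eq, OfNat.ofNat_ne_zero, not_false_eq_true, zero_pow, mul_zero, add_zero]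
        have hqM : q ⬝ᵥ (M *ᵥ q) ≤ 0 := by linarith [hz]
        have hball : ∀ s : ℝ, sProcObj x v ξ η (s • q) ≤ S := by
          intro s
          apply hub
          rw [Matrix.mulVec_smul, dotProduct_smul, smul_dotProduct]
          simp only [smul_eq_mul]
          nlinarith [sq_nonneg s]
        have := leading_nonpos x v ξ η S q hball
        nlinarith [this]
      · -- t ≠ 0 : scale down to the ellipsoid
        have ht2 : 0 < t^2 := by positivity
        have hmem : (t⁻¹ • q) ⬝ᵥ (M *ᵥ (t⁻¹ • q)) ≤ 1 := by
          rw [Matrix.mulVec_smul, dotProduct_smul, smul_dotProduct]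
          simp only [smul_eq_mul]
          have : t⁻¹ * (t⁻¹ * (q ⬝ᵥ (M *ᵥ q))) = (q ⬝ᵥ (M *ᵥ q)) / t^2 := by
            rw [div_eq_mul_inv, pow_two, mul_inv]; ring
          rw [this]
          rw [div_le_one ht2]
          linarith [hz]
        have hf := hub _ hmem
        rw [sProcObj_eq] at hf
        have e1 : t⁻¹ • q - v = t⁻¹ • (q - t • v) := by
          rw [smul_sub, smul_smul, inv_mul_cancel₀ ht, one_smul]
        have e2 : t⁻¹ • q - ξ = t⁻¹ • (q - t • ξ) := by
          rw [smul_sub, smul_smul, inv_mul_cancel₀ ht, one_smul]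
        rw [e1, e2] at hf
        simp only [dotProduct_smul, smul_dotProduct, smul_eq_mul] at hf
        -- hf : (t⁻¹ * X)^2 - η * (t⁻¹ * (t⁻¹ * N)) ≤ S
        have key : (x ⬝ᵥ (q - t • v))^2 - η * ((q - t • ξ) ⬝ᵥ (q - t • ξ)) ≤ S * t^2 := by
          have ht2' : t^2 ≠ 0 := ht2.ne'
          have := mul_le_mul_of_nonneg_left hf ht2.le
          calc (x ⬝ᵥ (q - t • v))^2 - η * ((q - t • ξ) ⬝ᵥ (q - t • ξ))
              = t^2 * ((t⁻¹ * (x ⬝ᵥ (q - t • v)))^2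
                - η * (t⁻¹ * (t⁻¹ * ((q - t • ξ) ⬝ᵥ (q - t • ξ))))) := by
                field_simp
            _ ≤ t^2 * S := by nlinarith [this]
            _ = S * t^2 := by ring
        linarith
    obtain ⟨lam, hlam, hineq⟩ := homog_s_lemma A₁ B₂ _ h₀ himp
    refine ⟨lam, hlam, Matrix.PosSemidef.of_dotProduct_mulVec_nonneg ?_ ?_⟩
    · -- Hermitian
      rw [Matrix.IsHermitian]
      ext i j
      cases i with
      | inl i =>
        cases j with
        | inl j =>
          simp only [sProcMat, Matrix.conjTranspose_apply, Matrix.fromBlocks_apply₁₁, star_trivial,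
            Matrix.add_apply, Matrix.sub_apply, Matrix.smul_apply, Matrix.one_apply,
            Matrix.vecMulVec_apply, smul_eq_mul]
          have hMs : M j i = M i j := by
            have := congrFun (congrFun hM.1 i) j
            simpa [Matrix.conjTranspose_apply] using this
          rw [hMs, mul_comm (x j) (x i)]
          by_cases hij : i = j
          · subst hij; rfl
          · simp [hij, Ne.symm hij]
        | inr u => rfl
      | inr u =>
        cases j with
        | inl j => rfl
        | inr u' => rfl
    · -- positivity
      intro z
      rw [show star z = z from rfl]
      rw [z_decomp z]
      set q : Fin n → ℝ := fun i => z (Sum.inl i)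
      set t : ℝ := z (Sum.inr ())
      have := hineq (Sum.elim q (fun _ => t))
      rw [hQA, hQB] at this
      rw [qf_sProcMat]
      nlinarith [this]
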